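/- Let X, Y be in the spectrahedron S_d, and let τ, γ ∈ [0,1] satisfy γτ/(1-γ) ≥ ‖X - Y‖_F (with γ < 1). Let P be the orthogonal projection onto the span of eigenvectors of Y with eigenvalues of magnitude at least τ. Then Y ⪰ (1-γ)·P X P in the Loewner order. -/

import Mathlib

open Matrix BigOperators

noncomputable def frobNorm {d : ℕ} (A : Matrix (Fin d) (Fin d) ℝ) : ℝ :=
  Real.sqrt (∑ i, ∑ j, (A i j) ^ 2)

noncomputable def vnorm {d : ℕ} (v : Fin d → ℝ) : ℝ :=
  Real.sqrt (∑ i, (v i) ^ 2)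

def dotp {d : ℕ} (A B : Matrix (Fin d) (Fin d) ℝ) : ℝ :=
  ∑ i, ∑ j, A i j * B i j

def quadForm {d : ℕ} (A : Matrix (Fin d) (Fin d) ℝ) (v : Fin d → ℝ) : ℝ :=
  ∑ i, ∑ j, v i * A i j * v j

/-- The spectrahedron: real symmetric PSD matrices with unit trace. -/
def Spectra (d : ℕ) : Set (Matrix (Fin d) (Fin d) ℝ) :=
  {X | X.PosSemidef ∧ X.trace = 1}

/-- Projection onto the span of eigenvectors of `Y` whose eigenvalues have magnitude ≥ τ. -/
noncomputable def specProj {d : ℕ} {Y : Matrix (Fin d) (Fin d) ℝ}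
    (hY : Y.IsHermitian) (τ : ℝ) : Matrix (Fin d) (Fin d) ℝ :=
  ∑ j : Fin d, if τ ≤ |hY.eigenvalues j| then
    Matrix.vecMulVec (fun i => hY.eigenvectorBasis j i) (fun i => hY.eigenvectorBasis j i)
  else 0

lemma orth {d : ℕ} {Y : Matrix (Fin d) (Fin d) ℝ} (hY : Y.IsHermitian) (j l : Fin d) :
    ∑ i, hY.eigenvectorBasis j i * hY.eigenvectorBasis l i = if j = l then 1 else 0 := by
  simpa [PiLp.inner_apply, RCLike.inner_apply, mul_comm] using
    (orthonormal_iff_ite.mp hY.eigenvectorBasis.orthonormal j l)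


lemma spec_entry {d : ℕ} {Y : Matrix (Fin d) (Fin d) ℝ} (hY : Y.IsHermitian) (i k : Fin d) :
    Y i k = ∑ j, hY.eigenvalues j * (hY.eigenvectorBasis j i * hY.eigenvectorBasis j k) := by
  conv_lhs => rw [hY.spectral_theorem]
  simp [Matrix.mul_apply, Matrix.mul_diagonal, Matrix.conjTranspose_apply,
    Matrix.IsHermitian.eigenvectorUnitary_apply, RCLike.ofReal_real_eq_id]
  exact Finset.sum_congr rfl fun j _ => by
    simp [Matrix.diagonal_apply, mul_ite, mul_zero, Finset.sum_ite_eq]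
    ring


lemma specProj_apply {d : ℕ} {Y : Matrix (Fin d) (Fin d) ℝ} (hY : Y.IsHermitian) (τ : ℝ)
    (i k : Fin d) : specProj hY τ i k =
    ∑ j, if τ ≤ |hY.eigenvalues j| then hY.eigenvectorBasis j i * hY.eigenvectorBasis j k else 0 := by
  simp [specProj, Matrix.sum_apply, Matrix.vecMulVec_apply,
    apply_ite (fun M : Matrix (Fin d) (Fin d) ℝ => M i k)]

theorem stmt2 {d : ℕ} (X Y : Matrix (Fin d) (Fin d) ℝ)
    (hX : X.PosSemidef) (hXtr : X.trace = 1)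
    (hY : Y.PosSemidef) (hYtr : Y.trace = 1)
    (τ γ : ℝ) (hτ : τ ∈ Set.Icc (0:ℝ) 1) (hγ : γ ∈ Set.Ico (0:ℝ) 1)
    (hcond : frobNorm (X - Y) ≤ γ * τ / (1 - γ)) :
    (Y - (1 - γ) • (specProj hY.1 τ * X * specProj hY.1 τ)).PosSemidef := by
  obtain ⟨hτ0, hτ1⟩ := hτ
  obtain ⟨hγ0, hγ1⟩ := hγ
  have h1γ : (0:ℝ) < 1 - γ := by linarith
  set hHY := hY.1 with hHYdef
  set v : Fin d → Fin d → ℝ := fun j i => hHY.eigenvectorBasis j i with hv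
  set lam : Fin d → ℝ := hHY.eigenvalues with hlam
  set P : Matrix (Fin d) (Fin d) ℝ := specProj hHY τ with hP
  have hlamnn : ∀ j, 0 ≤ lam j := fun j => hY.eigenvalues_nonneg j
  have hPsym : ∀ i k, P i k = P k i := by
    intro i k
    rw [hP, specProj_apply, specProj_apply]
    exact Finset.sum_congr rfl fun j _ => by rw [mul_comm]
  have hPherm : P.IsHermitian := by
    ext i k
    simp only [Matrix.conjTranspose_apply, star_trivial]
    exact hPsym k i
  rw [Matrix.posSemidef_iff_dotProduct_mulVec]
  constructor
  · refine Matrix.IsHermitian.sub hHY ?_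
    have hM : (P * X * P).IsHermitian := by
      have : P * X * P = P * X * Pᴴ := by rw [hPherm]
      rw [this]
      exact Matrix.isHermitian_mul_mul_conjTranspose P hX.1
    unfold Matrix.IsHermitian at hM ⊢
    rw [Matrix.conjTranspose_smul, hM, star_trivial]
  · intro x
    have hstar : star x = x := by
      funext i; simp
    rw [hstar]
    set c : Fin d → ℝ := fun j => ∑ i, v j i * x i with hc
    set w : Fin d → ℝ := P *ᵥ x with hw
    -- entrywise formula for w
    have hwi : ∀ i, w i = ∑ j, if τ ≤ |lam j| then c j * v j i else 0 := by
      intro i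
      rw [hw, Matrix.mulVec, dotProduct]
      simp_rw [hP, specProj_apply, Finset.sum_mul, ite_mul, zero_mul]
      simp_rw [← hlam]
      rw [Finset.sum_comm]
      refine Finset.sum_congr rfl fun j _ => ?_
      by_cases h : τ ≤ |lam j|
      · simp only [if_pos h, hc, Finset.sum_mul, Finset.mul_sum]
        exact Finset.sum_congr rfl fun k _ => by ring
      · simp [if_neg h]
    -- inner product of eigenvector with w
    have hvw : ∀ l, ∑ i, v l i * w i = if τ ≤ |lam l| then c l else 0 := by
      intro l
      simp_rw [hwi, Finset.mul_sum]
      rw [Finset.sum_comm]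
      have : ∀ j, (∑ i, v l i * if τ ≤ |lam j| then c j * v j i else 0)
          = if l = j then (if τ ≤ |lam l| then c l else 0) else 0 := by
        intro j
        by_cases h : τ ≤ |lam j|
        · simp only [if_pos h]
          have : ∑ i, v l i * (c j * v j i) = c j * ∑ i, v l i * v j i := by
            rw [Finset.mul_sum]; exact Finset.sum_congr rfl fun i _ => by ring
          rw [this, orth]
          by_cases hlj : l = j
          · subst hlj; simp [if_pos h]
          · simp [hlj]
        · simp only [if_neg h, mul_zero, Finset.sum_const_zero]
          by_cases hlj : l = j
          · subst hlj; simp [if_neg h]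
          · simp [hlj]
      simp_rw [this]
      simp
    set N : ℝ := ∑ i, w i ^ 2 with hN
    have hN0 : 0 ≤ N := Finset.sum_nonneg fun i _ => sq_nonneg _
    have hNform : N = ∑ j, if τ ≤ |lam j| then c j ^ 2 else 0 := by
      rw [hN]
      have hsplit : ∀ i, w i ^ 2 = ∑ j, (if τ ≤ |lam j| then c j * v j i else 0) * w i := by
        intro i; rw [← Finset.sum_mul, ← hwi, sq]
      simp_rw [hsplit]
      rw [Finset.sum_comm]
      refine Finset.sum_congr rfl fun j _ => ?_
      by_cases h : τ ≤ |lam j|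
      · simp only [if_pos h]
        have : ∀ i, c j * v j i * w i = c j * (v j i * w i) := fun i => by ring
        simp_rw [this, ← Finset.mul_sum, hvw j, if_pos h]
        ring
      · simp [if_neg h]
    -- generic quadratic form formula
    have quad : ∀ u : Fin d → ℝ,
        (∑ i, ∑ k, u i * Y i k * u k) = ∑ j, lam j * (∑ i, v j i * u i) ^ 2 := by
      intro u
      have h1 : ∀ i k, u i * Y i k * u k
          = ∑ j, lam j * (v j i * u i) * (v j k * u k) := by
        intro i k
        rw [spec_entry hHY i k, Finset.mul_sum, Finset.sum_mul]
        exact Finset.sum_congr rfl fun j _ => by ring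
      have h2 : ∀ j, lam j * (∑ i, v j i * u i) ^ 2
          = ∑ i, ∑ k, lam j * (v j i * u i) * (v j k * u k) := by
        intro j
        rw [sq, Finset.sum_mul_sum, Finset.mul_sum]
        refine Finset.sum_congr rfl fun i _ => ?_
        rw [Finset.mul_sum]
        exact Finset.sum_congr rfl fun k _ => by ring
      simp_rw [h1, h2]
      exact Eq.trans (Finset.sum_congr rfl fun i _ => Finset.sum_comm) Finset.sum_comm
    have hxYx : (∑ i, ∑ k, x i * Y i k * x k) = ∑ j, lam j * c j ^ 2 := quad x
    have hwYw : (∑ i, ∑ k, w i * Y i k * w k)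
        = ∑ j, if τ ≤ |lam j| then lam j * c j ^ 2 else 0 := by
      rw [quad w]
      refine Finset.sum_congr rfl fun j _ => ?_
      rw [hvw j]
      by_cases h : τ ≤ |lam j| <;> simp [h]
    have key : x ⬝ᵥ (Y - (1 - γ) • (P * X * P)) *ᵥ x
        = (∑ i, ∑ k, x i * Y i k * x k)
          - (1 - γ) * (∑ i, ∑ k, w i * X i k * w k) := by
      rw [Matrix.sub_mulVec, dotProduct_sub, Matrix.smul_mulVec,
        dotProduct_smul]
      congr 1
      · simp only [dotProduct, Matrix.mulVec, Finset.mul_sum]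
        exact Finset.sum_congr rfl fun i _ => Finset.sum_congr rfl fun k _ => by ring
      · rw [smul_eq_mul]
        congr 1
        rw [← Matrix.mulVec_mulVec, ← Matrix.mulVec_mulVec, Matrix.dotProduct_mulVec]
        have hxP : x ᵥ* P = w := by
          funext i
          rw [hw]
          simp only [Matrix.vecMul, Matrix.mulVec, dotProduct]
          exact Finset.sum_congr rfl fun k _ => by rw [hPsym i k]; ring
        rw [hxP, ← hw]
        simp only [dotProduct, Matrix.mulVec, Finset.mul_sum]
        exact Finset.sum_congr rfl fun i _ => Finset.sum_congr rfl fun k _ => by ring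
    set S : ℝ := ∑ i, ∑ k, (X i k - Y i k) * (w i * w k) with hS
    have hsplit : (∑ i, ∑ k, w i * X i k * w k)
        = (∑ i, ∑ k, w i * Y i k * w k) + S := by
      rw [hS, ← Finset.sum_add_distrib]
      refine Finset.sum_congr rfl fun i _ => ?_
      rw [← Finset.sum_add_distrib]
      exact Finset.sum_congr rfl fun k _ => by ring
    have hA0 : 0 ≤ ∑ i, ∑ k, (X i k - Y i k) ^ 2 :=
      Finset.sum_nonneg fun i _ => Finset.sum_nonneg fun k _ => sq_nonneg _
    have hF0 : 0 ≤ frobNorm (X - Y) := Real.sqrt_nonneg _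
    have hCS : S ≤ frobNorm (X - Y) * N := by
      have h := Finset.sum_mul_sq_le_sq_mul_sq Finset.univ
        (fun p : Fin d × Fin d => X p.1 p.2 - Y p.1 p.2) (fun p => w p.1 * w p.2)
      have e1 : (∑ p : Fin d × Fin d, (X p.1 p.2 - Y p.1 p.2) * (w p.1 * w p.2)) = S :=
        Fintype.sum_prod_type _
      have e2 : (∑ p : Fin d × Fin d, (X p.1 p.2 - Y p.1 p.2) ^ 2)
          = ∑ i, ∑ k, (X i k - Y i k) ^ 2 := Fintype.sum_prod_type _
      have e3 : (∑ p : Fin d × Fin d, (w p.1 * w p.2) ^ 2) = N ^ 2 := by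
        rw [Fintype.sum_prod_type, sq N,
          Finset.sum_mul_sum Finset.univ Finset.univ (fun i => w i ^ 2) (fun k => w k ^ 2)]
        simp [mul_pow]
      rw [e1, e2, e3] at h
      have habs : |S| ≤ Real.sqrt ((∑ i, ∑ k, (X i k - Y i k) ^ 2) * N ^ 2) := by
        rw [← Real.sqrt_sq_eq_abs]
        exact Real.sqrt_le_sqrt h
      have heq : Real.sqrt ((∑ i, ∑ k, (X i k - Y i k) ^ 2) * N ^ 2)
          = frobNorm (X - Y) * N := by
        rw [Real.sqrt_mul hA0, Real.sqrt_sq hN0, frobNorm]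
        simp [Matrix.sub_apply]
      exact le_trans (le_abs_self S) (heq ▸ habs)
    have hτN : τ * N ≤ ∑ i, ∑ k, w i * Y i k * w k := by
      rw [hwYw, hNform, Finset.mul_sum]
      refine Finset.sum_le_sum fun j _ => ?_
      by_cases h : τ ≤ |lam j|
      · simp only [if_pos h]
        have hτl : τ ≤ lam j := by rwa [abs_of_nonneg (hlamnn j)] at h
        nlinarith [sq_nonneg (c j)]
      · simp [if_neg h]
    have hwx : (∑ i, ∑ k, w i * Y i k * w k) ≤ ∑ i, ∑ k, x i * Y i k * x k := by
      rw [hwYw, hxYx]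
      refine Finset.sum_le_sum fun j _ => ?_
      by_cases h : τ ≤ |lam j|
      · simp [if_pos h]
      · simp only [if_neg h]
        exact mul_nonneg (hlamnn j) (sq_nonneg _)
    have hFcond : (1 - γ) * frobNorm (X - Y) ≤ γ * τ := by
      have := (le_div_iff₀ h1γ).mp hcond
      linarith [this]
    rw [key, hsplit]
    nlinarith [mul_le_mul_of_nonneg_left hCS (le_of_lt h1γ),
      mul_le_mul_of_nonneg_right hFcond hN0,
      mul_le_mul_of_nonneg_left hτN hγ0, hwx]
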